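/- arXiv:1809.09422 — 8 statements merged into one kernel-verified Lean document; each statement's English description precedes it below -/
import Mathlib

section
/- Let Λ ≥ 1, let t ∈ {0,1,…,Λ}, and let L : {1,…,Λ} → ℕ be non-increasing (L_1 ≥ L_2 ≥ … ≥ L_Λ). For j ≥ 1 define R_j = |{λ ∈ {1,…,Λ} : L_λ ≥ j}|. Then Σ_{j=1}^{L_1} [ C(Λ, t+1) − C(Λ−R_j, t+1) ] = Σ_{r=1}^{Λ−t} L_r · C(Λ−r, t), where C(n,k) denotes the binomial coefficient (equal to 0 when k > n). -/
open Finset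

lemma telescope_choose (Λ t : ℕ) : ∀ Rv, Rv ≤ Λ →
    ((Nat.choose Λ (t + 1) : ℤ) - (Nat.choose (Λ - Rv) (t + 1) : ℤ)) =
      ∑ r ∈ Finset.Icc 1 Rv, (Nat.choose (Λ - r) t : ℤ) := by
  intro Rv
  induction Rv with
  | zero => simp
  | succ n ih =>
    intro h
    rw [Finset.sum_Icc_succ_top (by omega), ← ih (by omega)]
    have hn : Λ - n = (Λ - (n + 1)) + 1 := by omega
    rw [hn, Nat.choose_succ_succ (Λ - (n+1)) t]
    push_cast
    ring

/-- Total delay identity: for a non-increasing profile `L` with round sizes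
`R j = |{λ ∈ {1,…,Λ} : L λ ≥ j}|`,
`Σ_{j=1}^{L 1} [C(Λ, t+1) − C(Λ−R_j, t+1)] = Σ_{r=1}^{Λ−t} L r · C(Λ−r, t)`. -/
theorem total_delay_identity (Λ t : ℕ) (hΛ : 1 ≤ Λ) (ht : t ≤ Λ) (L : ℕ → ℕ)
    (hmono : ∀ a b, 1 ≤ a → a ≤ b → b ≤ Λ → L b ≤ L a)
    (R : ℕ → ℕ)
    (hR : ∀ j, R j = ((Finset.Icc 1 Λ).filter (fun l => j ≤ L l)).card) :
    ∑ j ∈ Finset.Icc 1 (L 1),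
        ((Nat.choose Λ (t + 1) : ℤ) - (Nat.choose (Λ - R j) (t + 1) : ℤ)) =
      ∑ r ∈ Finset.Icc 1 (Λ - t), (L r : ℤ) * (Nat.choose (Λ - r) t : ℤ) := by
  have hRle : ∀ j, R j ≤ Λ := by
    intro j
    rw [hR j]
    calc ((Finset.Icc 1 Λ).filter (fun l => j ≤ L l)).card
        ≤ (Finset.Icc 1 Λ).card := Finset.card_filter_le _ _
      _ = Λ := by rw [Nat.card_Icc]; omega
  -- key equivalence: for r ∈ [1, Λ], r ≤ R j ↔ j ≤ L r
  have key : ∀ r j, 1 ≤ r → r ≤ Λ → (r ≤ R j ↔ j ≤ L r) := by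
    intro r j hr hrΛ
    rw [hR j]
    constructor
    · intro hcard
      by_contra hjl
      push_neg at hjl
      have hsub : (Finset.Icc 1 Λ).filter (fun l => j ≤ L l) ⊆ Finset.Icc 1 (r - 1) := by
        intro l hl
        simp only [Finset.mem_filter, Finset.mem_Icc] at hl ⊢
        obtain ⟨⟨h1, h2⟩, h3⟩ := hl
        refine ⟨h1, ?_⟩
        by_contra hlr
        push_neg at hlr
        have := hmono r l hr (by omega) h2
        omega
      have := Finset.card_le_card hsub
      rw [Nat.card_Icc] at this
      omega
    · intro hjl
      have hsub : Finset.Icc 1 r ⊆ (Finset.Icc 1 Λ).filter (fun l => j ≤ L l) := by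
        intro l hl
        simp only [Finset.mem_filter, Finset.mem_Icc] at hl ⊢
        obtain ⟨h1, h2⟩ := hl
        exact ⟨⟨h1, by omega⟩, le_trans hjl (hmono l r h1 h2 hrΛ)⟩
      have := Finset.card_le_card hsub
      rw [Nat.card_Icc] at this
      omega
  -- rewrite each summand as a sum over r ∈ [1, Λ - t]
  have step : ∀ j,
      ((Nat.choose Λ (t + 1) : ℤ) - (Nat.choose (Λ - R j) (t + 1) : ℤ)) =
        ∑ r ∈ Finset.Icc 1 (Λ - t), (if j ≤ L r then (Nat.choose (Λ - r) t : ℤ) else 0) := by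
    intro j
    rw [telescope_choose Λ t (R j) (hRle j)]
    have e1 : ∑ r ∈ Finset.Icc 1 (R j), (Nat.choose (Λ - r) t : ℤ) =
        ∑ r ∈ Finset.Icc 1 Λ, (if r ≤ R j then (Nat.choose (Λ - r) t : ℤ) else 0) := by
      rw [← Finset.sum_filter]
      apply Finset.sum_congr
      · ext r
        simp only [Finset.mem_Icc, Finset.mem_filter]
        have := hRle j
        omega
      · intros; rfl
    have e2 : ∑ r ∈ Finset.Icc 1 Λ, (if r ≤ R j then (Nat.choose (Λ - r) t : ℤ) else 0) =
        ∑ r ∈ Finset.Icc 1 (Λ - t), (if r ≤ R j then (Nat.choose (Λ - r) t : ℤ) else 0) := by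
      symm
      apply Finset.sum_subset
      · apply Finset.Icc_subset_Icc_right; omega
      · intro r hr hr2
        simp only [Finset.mem_Icc] at hr hr2
        have hz : Nat.choose (Λ - r) t = 0 := Nat.choose_eq_zero_of_lt (by omega)
        rw [hz]
        split <;> simp
    rw [e1, e2]
    apply Finset.sum_congr rfl
    intro r hr
    simp only [Finset.mem_Icc] at hr
    exact if_congr (key r j hr.1 (by omega)) rfl rfl
  calc ∑ j ∈ Finset.Icc 1 (L 1),
        ((Nat.choose Λ (t + 1) : ℤ) - (Nat.choose (Λ - R j) (t + 1) : ℤ))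
      = ∑ j ∈ Finset.Icc 1 (L 1), ∑ r ∈ Finset.Icc 1 (Λ - t),
          (if j ≤ L r then (Nat.choose (Λ - r) t : ℤ) else 0) := by
        exact Finset.sum_congr rfl fun j _ => step j
    _ = ∑ r ∈ Finset.Icc 1 (Λ - t), ∑ j ∈ Finset.Icc 1 (L 1),
          (if j ≤ L r then (Nat.choose (Λ - r) t : ℤ) else 0) := Finset.sum_comm
    _ = ∑ r ∈ Finset.Icc 1 (Λ - t), (L r : ℤ) * (Nat.choose (Λ - r) t : ℤ) := by
        apply Finset.sum_congr rfl
        intro r hr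
        simp only [Finset.mem_Icc] at hr
        have hLr : L r ≤ L 1 := hmono 1 r le_rfl hr.1 (by omega)
        rw [← Finset.sum_filter]
        have hfe : (Finset.Icc 1 (L 1)).filter (fun j => j ≤ L r) = Finset.Icc 1 (L r) := by
          ext j
          simp only [Finset.mem_filter, Finset.mem_Icc]
          omega
        rw [hfe, Finset.sum_const, Nat.card_Icc]
        simp [Nat.add_sub_cancel, mul_comm]
end

section
/- Let N ≥ K ≥ 1 and Λ ≥ 1 be natural numbers, let i ∈ {0,…,Λ−1}, and let L : {1,…,Λ} → ℕ satisfy 1 ≤ L_r ≤ K for every r ∈ {1,…,Λ−i}. Then, as an identity of rational numbers, [ C(N−1, K−1) · Σ_{r=1}^{Λ−i} P(Λ−i−1, r−1) · (Λ−r)! · L_r · P(K−1, L_r−1) · (K−L_r)! · (Λ−i) ] / ( P(N,K) · Λ! ) = Σ_{r=1}^{Λ−i} L_r · C(Λ−r, i) / ( N · C(Λ, i) ), where P(n,k) = n!/(n−k)! is the falling factorial (permutation coefficient) and C(n,k) is the binomial coefficient. -/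
open Finset

lemma hA_nat (N K l : ℕ) (hK : 1 ≤ K) (hKN : K ≤ N) (hl : 1 ≤ l) (hlK : l ≤ K) :
    N * (Nat.choose (N - 1) (K - 1) * (Nat.descFactorial (K - 1) (l - 1) *
      Nat.factorial (K - l))) = Nat.descFactorial N K := by
  have e1 : (K - 1) - (l - 1) = K - l := by omega
  have h1 : Nat.factorial (K - l) * Nat.descFactorial (K - 1) (l - 1) =
      Nat.factorial (K - 1) := by
    rw [← e1]; exact Nat.factorial_mul_descFactorial (by omega)
  apply Nat.eq_of_mul_eq_mul_right (Nat.factorial_pos (N - K))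
  have h2 : Nat.choose (N - 1) (K - 1) * Nat.factorial (K - 1) *
      Nat.factorial ((N - 1) - (K - 1)) = Nat.factorial (N - 1) :=
    Nat.choose_mul_factorial_mul_factorial (by omega)
  have e2 : (N - 1) - (K - 1) = N - K := by omega
  rw [e2] at h2
  have h3 : Nat.factorial (N - K) * Nat.descFactorial N K = Nat.factorial N :=
    Nat.factorial_mul_descFactorial hKN
  have h4 : N * Nat.factorial (N - 1) = Nat.factorial N :=
    Nat.mul_factorial_pred (by omega)
  calc N * (Nat.choose (N - 1) (K - 1) * (Nat.descFactorial (K - 1) (l - 1) *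
        Nat.factorial (K - l))) * Nat.factorial (N - K)
      = N * ((Nat.factorial (K - l) * Nat.descFactorial (K - 1) (l - 1)) *
        (Nat.choose (N - 1) (K - 1) * Nat.factorial (N - K))) := by ring
    _ = N * (Nat.choose (N - 1) (K - 1) * Nat.factorial (K - 1) *
        Nat.factorial (N - K)) := by rw [h1]; ring
    _ = N * Nat.factorial (N - 1) := by rw [h2]
    _ = Nat.factorial N := h4
    _ = Nat.factorial (N - K) * Nat.descFactorial N K := h3.symm
    _ = Nat.descFactorial N K * Nat.factorial (N - K) := by ring

lemma hB_nat (Λ i r : ℕ) (hi : i + 1 ≤ Λ) (hr : 1 ≤ r) (hrΛ : r ≤ Λ - i) :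
    (Λ - i) * (Nat.descFactorial (Λ - i - 1) (r - 1) *
      (Nat.factorial (Λ - r) * Nat.choose Λ i)) = Nat.choose (Λ - r) i * Nat.factorial Λ := by
  have e1 : Λ - i - 1 + 1 = Λ - i := by omega
  have e2 : r - 1 + 1 = r := by omega
  have h1 : Nat.descFactorial (Λ - i) r =
      (Λ - i) * Nat.descFactorial (Λ - i - 1) (r - 1) := by
    have h := Nat.succ_descFactorial_succ (Λ - i - 1) (r - 1)
    rw [e1, e2] at h; exact h
  apply Nat.eq_of_mul_eq_mul_right
    (Nat.mul_pos (Nat.factorial_pos (Λ - i - r)) (Nat.factorial_pos i))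
  have h2 : Nat.factorial (Λ - i - r) * Nat.descFactorial (Λ - i) r =
      Nat.factorial (Λ - i) := Nat.factorial_mul_descFactorial hrΛ
  have h3 : Nat.choose Λ i * Nat.factorial i * Nat.factorial (Λ - i) =
      Nat.factorial Λ := Nat.choose_mul_factorial_mul_factorial (by omega)
  have h4 : Nat.choose (Λ - r) i * Nat.factorial i * Nat.factorial ((Λ - r) - i) =
      Nat.factorial (Λ - r) := Nat.choose_mul_factorial_mul_factorial (by omega)
  have e3 : (Λ - r) - i = Λ - i - r := by omega
  rw [e3] at h4
  calc (Λ - i) * (Nat.descFactorial (Λ - i - 1) (r - 1) *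
        (Nat.factorial (Λ - r) * Nat.choose Λ i)) *
        (Nat.factorial (Λ - i - r) * Nat.factorial i)
      = (Nat.factorial (Λ - i - r) * ((Λ - i) * Nat.descFactorial (Λ - i - 1) (r - 1))) *
        (Nat.factorial (Λ - r) * (Nat.choose Λ i * Nat.factorial i)) := by ring
    _ = (Nat.factorial (Λ - i - r) * Nat.descFactorial (Λ - i) r) *
        (Nat.factorial (Λ - r) * (Nat.choose Λ i * Nat.factorial i)) := by rw [← h1]
    _ = Nat.factorial (Λ - r) * (Nat.choose Λ i * Nat.factorial i *
        Nat.factorial (Λ - i)) := by rw [h2]; ring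
    _ = Nat.factorial (Λ - r) * Nat.factorial Λ := by rw [h3]
    _ = (Nat.choose (Λ - r) i * Nat.factorial i * Nat.factorial (Λ - i - r)) *
        Nat.factorial Λ := by rw [h4]
    _ = Nat.choose (Λ - r) i * Nat.factorial Λ *
        (Nat.factorial (Λ - i - r) * Nat.factorial i) := by ring

/-- The counting identity for `Q_i` in the converse:
`[C(N−1,K−1) · Σ_{r=1}^{Λ−i} P(Λ−i−1, r−1)·(Λ−r)!·L_r·P(K−1, L_r−1)·(K−L_r)!·(Λ−i)]
  / (P(N,K)·Λ!) = Σ_{r=1}^{Λ−i} L_r·C(Λ−r, i) / (N·C(Λ, i))`,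
where `P(n,k) = n!/(n−k)!` is the falling factorial (`Nat.descFactorial`). -/
theorem Q_i_identity (N K Λ : ℕ) (hK : 1 ≤ K) (hKN : K ≤ N) (hΛ : 1 ≤ Λ)
    (i : ℕ) (hi : i + 1 ≤ Λ) (L : ℕ → ℕ)
    (hL : ∀ r ∈ Finset.Icc 1 (Λ - i), 1 ≤ L r ∧ L r ≤ K) :
    ((Nat.choose (N - 1) (K - 1) : ℚ) *
        ∑ r ∈ Finset.Icc 1 (Λ - i),
          (Nat.descFactorial (Λ - i - 1) (r - 1) : ℚ) *
            (Nat.factorial (Λ - r) : ℚ) * (L r : ℚ) *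
            (Nat.descFactorial (K - 1) (L r - 1) : ℚ) *
            (Nat.factorial (K - L r) : ℚ) * ((Λ - i : ℕ) : ℚ)) /
      ((Nat.descFactorial N K : ℚ) * (Nat.factorial Λ : ℚ)) =
    (∑ r ∈ Finset.Icc 1 (Λ - i), (L r : ℚ) * (Nat.choose (Λ - r) i : ℚ)) /
      ((N : ℚ) * (Nat.choose Λ i : ℚ)) := by
  have hdf : Nat.descFactorial N K ≠ 0 := by
    simp [Nat.descFactorial_eq_zero_iff_lt]; omega
  have hden1 : ((Nat.descFactorial N K : ℚ) * (Nat.factorial Λ : ℚ)) ≠ 0 := by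
    positivity
  have hch : Nat.choose Λ i ≠ 0 := (Nat.choose_pos (by omega)).ne'
  have hN : (N : ℚ) ≠ 0 := Nat.cast_ne_zero.mpr (by omega)
  have hden2 : ((N : ℚ) * (Nat.choose Λ i : ℚ)) ≠ 0 :=
    mul_ne_zero hN (Nat.cast_ne_zero.mpr hch)
  rw [div_eq_div_iff hden1 hden2, mul_sum, sum_mul, sum_mul]
  refine Finset.sum_congr rfl fun r hr => ?_
  obtain ⟨hr1, hr2⟩ := Finset.mem_Icc.mp hr
  obtain ⟨hl1, hl2⟩ := hL r hr
  have key : (Nat.choose (N - 1) (K - 1)) *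
      (Nat.descFactorial (Λ - i - 1) (r - 1) * Nat.factorial (Λ - r) * L r *
        Nat.descFactorial (K - 1) (L r - 1) * Nat.factorial (K - L r) * (Λ - i)) *
      (N * Nat.choose Λ i) =
      L r * Nat.choose (Λ - r) i * (Nat.descFactorial N K * Nat.factorial Λ) := by
    calc Nat.choose (N - 1) (K - 1) *
          (Nat.descFactorial (Λ - i - 1) (r - 1) * Nat.factorial (Λ - r) * L r *
            Nat.descFactorial (K - 1) (L r - 1) * Nat.factorial (K - L r) * (Λ - i)) *
          (N * Nat.choose Λ i)
        = (N * (Nat.choose (N - 1) (K - 1) * (Nat.descFactorial (K - 1) (L r - 1) *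
            Nat.factorial (K - L r)))) *
          ((Λ - i) * (Nat.descFactorial (Λ - i - 1) (r - 1) *
            (Nat.factorial (Λ - r) * Nat.choose Λ i))) * L r := by ring
      _ = Nat.descFactorial N K * (Nat.choose (Λ - r) i * Nat.factorial Λ) * L r := by
          rw [hA_nat N K (L r) hK hKN hl1 hl2, hB_nat Λ i r hi hr1 hr2]
      _ = L r * Nat.choose (Λ - r) i * (Nat.descFactorial N K * Nat.factorial Λ) := by ring
  have key' := congrArg (fun n : ℕ => (n : ℚ)) key
  push_cast at key'
  linear_combination key'
end

section
/- Let Λ ≥ 1 and let L : {1,…,Λ} → ℕ be non-increasing (L_1 ≥ L_2 ≥ … ≥ L_Λ). For i ∈ {0,1,…,Λ} define the rational number c_i = ( Σ_{r=1}^{Λ−i} L_r · C(Λ−r, i) ) / C(Λ, i), with the convention that the empty sum is 0 (so c_Λ = 0). Then the sequence (c_i)_{i=0}^{Λ} is non-increasing: c_{i+1} ≤ c_i for all i ∈ {0,…,Λ−1}. -/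
open Finset

lemma key_nat (Λ i : ℕ) (L : ℕ → ℕ) (h : i + 1 ≤ Λ) :
    (∑ r ∈ Finset.Icc 1 (Λ - (i + 1)), L r * Nat.choose (Λ - r) (i + 1)) * Nat.choose Λ i ≤
    (∑ r ∈ Finset.Icc 1 (Λ - i), L r * Nat.choose (Λ - r) i) * Nat.choose Λ (i + 1) := by
  rw [Finset.sum_mul, Finset.sum_mul]
  calc (∑ r ∈ Finset.Icc 1 (Λ - (i + 1)), L r * Nat.choose (Λ - r) (i + 1) * Nat.choose Λ i)
      ≤ ∑ r ∈ Finset.Icc 1 (Λ - (i + 1)), L r * Nat.choose (Λ - r) i * Nat.choose Λ (i + 1) := by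
        apply Finset.sum_le_sum
        intro r _
        have hkey : Nat.choose (Λ - r) (i + 1) * Nat.choose Λ i ≤
            Nat.choose (Λ - r) i * Nat.choose Λ (i + 1) := by
          have hpos : 0 < i + 1 := Nat.succ_pos i
          apply Nat.le_of_mul_le_mul_right _ hpos
          have e1 : Nat.choose (Λ - r) (i + 1) * Nat.choose Λ i * (i + 1)
              = Nat.choose (Λ - r) i * (Λ - r - i) * Nat.choose Λ i := by
            rw [mul_right_comm, Nat.choose_succ_right_eq]
          have e2 : Nat.choose (Λ - r) i * Nat.choose Λ (i + 1) * (i + 1)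
              = Nat.choose (Λ - r) i * (Nat.choose Λ i * (Λ - i)) := by
            rw [mul_assoc, Nat.choose_succ_right_eq]
          rw [e1, e2]
          have : Λ - r - i ≤ Λ - i := Nat.sub_le_sub_right (Nat.sub_le Λ r) i
          calc Nat.choose (Λ - r) i * (Λ - r - i) * Nat.choose Λ i
              ≤ Nat.choose (Λ - r) i * (Λ - i) * Nat.choose Λ i := by
                exact Nat.mul_le_mul_right _ (Nat.mul_le_mul_left _ this)
            _ = Nat.choose (Λ - r) i * (Nat.choose Λ i * (Λ - i)) := by ring
        calc L r * Nat.choose (Λ - r) (i + 1) * Nat.choose Λ i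
            = L r * (Nat.choose (Λ - r) (i + 1) * Nat.choose Λ i) := by ring
          _ ≤ L r * (Nat.choose (Λ - r) i * Nat.choose Λ (i + 1)) :=
              Nat.mul_le_mul_left _ hkey
          _ = L r * Nat.choose (Λ - r) i * Nat.choose Λ (i + 1) := by ring
    _ ≤ ∑ r ∈ Finset.Icc 1 (Λ - i), L r * Nat.choose (Λ - r) i * Nat.choose Λ (i + 1) := by
        apply Finset.sum_le_sum_of_subset
        apply Finset.Icc_subset_Icc_right
        exact Nat.sub_le_sub_left (Nat.le_succ i) Λ

/-- Monotonicity of the converse coefficients: for a non-increasing profile `L`,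
the sequence `c i = (Σ_{r=1}^{Λ−i} L r · C(Λ−r, i)) / C(Λ, i)` is non-increasing
on `{0,…,Λ}`. -/
theorem c_i_nonincreasing (Λ : ℕ) (hΛ : 1 ≤ Λ) (L : ℕ → ℕ)
    (hmono : ∀ a b, 1 ≤ a → a ≤ b → b ≤ Λ → L b ≤ L a)
    (c : ℕ → ℚ)
    (hc : ∀ i, c i =
      (∑ r ∈ Finset.Icc 1 (Λ - i), (L r : ℚ) * (Nat.choose (Λ - r) i : ℚ)) /
        (Nat.choose Λ i : ℚ)) :
    ∀ i, i + 1 ≤ Λ → c (i + 1) ≤ c i := by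
  intro i hi
  rw [hc i, hc (i + 1)]
  have h1 : (0 : ℚ) < (Nat.choose Λ i : ℚ) := by
    exact_mod_cast Nat.choose_pos (le_of_lt hi)
  have h2 : (0 : ℚ) < (Nat.choose Λ (i + 1) : ℚ) := by
    exact_mod_cast Nat.choose_pos hi
  rw [div_le_div_iff₀ h2 h1]
  exact_mod_cast key_nat Λ i L hi
end

section
/- Let Λ ≥ 1, let N > 0 be a real number, let t ∈ {0,…,Λ}, and let c : {0,…,Λ} → ℝ be a non-increasing sequence that is convex, i.e., c_{i+1} − c_i ≤ c_{i+2} − c_{i+1} for all i ∈ {0,…,Λ−2}. Suppose x_0, x_1, …, x_Λ are nonnegative real numbers with Σ_{i=0}^{Λ} x_i = N and Σ_{i=0}^{Λ} i·x_i ≤ t·N. Then Σ_{i=0}^{Λ} c_i · x_i ≥ N · c_t. -/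
open Finset

/-- Jensen's-inequality optimization step: if `c : {0,…,Λ} → ℝ` is non-increasing
and convex, and `x_0,…,x_Λ ≥ 0` satisfy `Σ x_i = N` and `Σ i·x_i ≤ t·N`, then
`Σ c_i · x_i ≥ N · c_t`. -/
theorem jensen_step (Λ : ℕ) (hΛ : 1 ≤ Λ) (N : ℝ) (hN : 0 < N)
    (t : ℕ) (ht : t ≤ Λ) (c : ℕ → ℝ)
    (hmono : ∀ i, i + 1 ≤ Λ → c (i + 1) ≤ c i)
    (hconv : ∀ i, i + 2 ≤ Λ → c (i + 1) - c i ≤ c (i + 2) - c (i + 1))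
    (x : ℕ → ℝ) (hx : ∀ i, i ≤ Λ → 0 ≤ x i)
    (hsum : ∑ i ∈ Finset.range (Λ + 1), x i = N)
    (hcache : ∑ i ∈ Finset.range (Λ + 1), (i : ℝ) * x i ≤ (t : ℝ) * N) :
    N * c t ≤ ∑ i ∈ Finset.range (Λ + 1), c i * x i := by
  -- slopes are nondecreasing
  have slope_le : ∀ i j, i ≤ j → j + 1 ≤ Λ → c (i + 1) - c i ≤ c (j + 1) - c j := by
    intro i j hij hj
    induction j with
    | zero => have : i = 0 := Nat.le_zero.mp hij; subst this; exact le_refl _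
    | succ j ih =>
      rcases Nat.eq_or_lt_of_le hij with h | h
      · subst h; exact le_refl _
      · have hij' : i ≤ j := Nat.lt_succ_iff.mp h
        calc c (i + 1) - c i ≤ c (j + 1) - c j := ih hij' (by omega)
          _ ≤ c (j + 1 + 1) - c (j + 1) := by
              have := hconv j (by omega); simpa using this
  -- choose a subgradient slope s at t
  obtain ⟨s, hs0, hsl, hsu⟩ :
      ∃ s : ℝ, s ≤ 0 ∧ (∀ k, k + 1 ≤ t → c (k + 1) - c k ≤ s) ∧
        (∀ k, t ≤ k → k + 1 ≤ Λ → s ≤ c (k + 1) - c k) := by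
    rcases lt_or_eq_of_le ht with hlt | heq
    · refine ⟨c (t + 1) - c t, ?_, ?_, ?_⟩
      · have := hmono t (by omega); linarith
      · intro k hk; exact slope_le k t (by omega) (by omega)
      · intro k hk hk'; exact slope_le t k hk hk'
    · refine ⟨c (Λ - 1 + 1) - c (Λ - 1), ?_, ?_, ?_⟩
      · have := hmono (Λ - 1) (by omega); linarith
      · intro k hk; exact slope_le k (Λ - 1) (by omega) (by omega)
      · intro k hk hk'; omega
  -- pointwise chord inequality
  have up : ∀ d, t + d ≤ Λ → c t + s * (d : ℝ) ≤ c (t + d) := by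
    intro d
    induction d with
    | zero => intro _; simp
    | succ d ih =>
      intro hd
      have h1 := ih (by omega)
      have h2 := hsu (t + d) (by omega) (by omega)
      have : c t + s * ((d : ℝ) + 1) = (c t + s * d) + s := by ring
      rw [show ((d : ℕ) + 1 : ℕ) = d + 1 from rfl]
      push_cast
      have : t + (d + 1) = (t + d) + 1 := by omega
      rw [this]
      nlinarith
  have down : ∀ d, d ≤ t → c t + s * (-(d : ℝ)) ≤ c (t - d) := by
    intro d
    induction d with
    | zero => intro _; simp
    | succ d ih =>
      intro hd
      have h1 := ih (by omega)
      have h2 := hsl (t - (d + 1)) (by omega)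
      have he : t - (d + 1) + 1 = t - d := by omega
      rw [he] at h2
      push_cast
      nlinarith
  have hpt : ∀ i, i ≤ Λ → c t + s * ((i : ℝ) - (t : ℝ)) ≤ c i := by
    intro i hi
    rcases le_or_gt t i with h | h
    · have := up (i - t) (by omega)
      have he : t + (i - t) = i := by omega
      rw [he] at this
      have hc : ((i - t : ℕ) : ℝ) = (i : ℝ) - (t : ℝ) := by
        push_cast [Nat.cast_sub h]; ring
      rwa [hc] at this
    · have := down (t - i) (by omega)
      have he : t - (t - i) = i := by omega
      rw [he] at this
      have hc : (-((t - i : ℕ) : ℝ)) = (i : ℝ) - (t : ℝ) := by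
        push_cast [Nat.cast_sub (le_of_lt h)]; ring
      rwa [hc] at this
  -- sum up
  have key : ∑ i ∈ Finset.range (Λ + 1), (c t + s * ((i : ℝ) - (t : ℝ))) * x i
      ≤ ∑ i ∈ Finset.range (Λ + 1), c i * x i := by
    apply Finset.sum_le_sum
    intro i hi
    have hi' : i ≤ Λ := by simpa [Nat.lt_succ_iff] using Finset.mem_range.mp hi
    exact mul_le_mul_of_nonneg_right (hpt i hi') (hx i hi')
  have expand : ∑ i ∈ Finset.range (Λ + 1), (c t + s * ((i : ℝ) - (t : ℝ))) * x i
      = c t * N + s * ((∑ i ∈ Finset.range (Λ + 1), (i : ℝ) * x i) - (t : ℝ) * N) := by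
    rw [← hsum]
    simp only [mul_sub, Finset.mul_sum, ← Finset.sum_sub_distrib, ← Finset.sum_add_distrib]
    apply Finset.sum_congr rfl
    intro i _
    ring
  have hfin : c t * N ≤ c t * N + s * ((∑ i ∈ Finset.range (Λ + 1), (i : ℝ) * x i) - (t : ℝ) * N) := by
    nlinarith [mul_nonneg (neg_nonneg.mpr hs0) (sub_nonneg.mpr hcache)]
  calc N * c t = c t * N := mul_comm _ _
    _ ≤ _ := hfin
    _ = _ := expand.symm
    _ ≤ _ := key
end

section
/- Let Λ ≥ 1, let K ≥ 1 and N ≥ 1 be natural numbers, let t ∈ {0,…,Λ}, and let L : {1,…,Λ} → ℕ be non-increasing with Σ_{r=1}^{Λ} L_r = K. For i ∈ {0,…,Λ} define c_i = ( Σ_{r=1}^{Λ−i} L_r · C(Λ−r, i) ) / C(Λ, i) (empty sum = 0). Then for all nonnegative real numbers x_0, …, x_Λ with Σ_{i=0}^{Λ} x_i = N and Σ_{i=0}^{Λ} i·x_i ≤ t·N, one has Σ_{i=0}^{Λ} (x_i/N) · c_i ≥ c_t = ( Σ_{r=1}^{Λ−t} L_r · C(Λ−r, t) ) / C(Λ,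 t). -/
open Finset

private lemma step_eq (n m i : ℕ) (hi : i < n) :
    (Nat.choose m (i+1) : ℝ) / (Nat.choose n (i+1) : ℝ)
      = (Nat.choose m i : ℝ) / (Nat.choose n i : ℝ)
        * (((m - i : ℕ) : ℝ) / ((n - i : ℕ) : ℝ)) := by
  rcases lt_or_ge m i with hmi | him
  · have h1 : Nat.choose m (i+1) = 0 := Nat.choose_eq_zero_of_lt (by omega)
    have h2 : Nat.choose m i = 0 := Nat.choose_eq_zero_of_lt hmi
    simp [h1, h2]
  · have hc1 : (0:ℝ) < Nat.choose n i := by exact_mod_cast Nat.choose_pos hi.le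
    have hc2 : (0:ℝ) < Nat.choose n (i+1) := by exact_mod_cast Nat.choose_pos hi
    have hni : (0:ℝ) < ((n - i : ℕ) : ℝ) := by
      have : 0 < n - i := by omega
      exact_mod_cast this
    have h1 : (Nat.choose m (i+1) : ℝ) * ((i:ℝ)+1)
        = (Nat.choose m i : ℝ) * ((m - i : ℕ) : ℝ) := by
      exact_mod_cast Nat.choose_succ_right_eq m i
    have h2 : (Nat.choose n (i+1) : ℝ) * ((i:ℝ)+1)
        = (Nat.choose n i : ℝ) * ((n - i : ℕ) : ℝ) := by
      exact_mod_cast Nat.choose_succ_right_eq n i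
    rw [div_mul_div_comm, div_eq_div_iff hc2.ne' (by positivity)]
    have hip : ((i:ℝ)+1) ≠ 0 := by positivity
    apply mul_left_cancel₀ hip
    linear_combination (((n - i : ℕ):ℝ) * (Nat.choose n i : ℝ)) * h1
      - ((Nat.choose m i : ℝ) * ((m - i : ℕ):ℝ)) * h2

private lemma choose_div_nonneg (n m i : ℕ) :
    (0:ℝ) ≤ (Nat.choose m i : ℝ) / (Nat.choose n i : ℝ) := by positivity

private lemma step_le (n m i : ℕ) (h : m ≤ n) :
    (Nat.choose m (i+1) : ℝ) / (Nat.choose n (i+1) : ℝ)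
      ≤ (Nat.choose m i : ℝ) / (Nat.choose n i : ℝ) := by
  rcases lt_or_ge i n with hi | hi
  · rw [step_eq n m i hi]
    have hni : (0:ℝ) < ((n - i : ℕ) : ℝ) := by
      have : 0 < n - i := by omega
      exact_mod_cast this
    have hle : (((m - i : ℕ)) : ℝ) ≤ ((n - i : ℕ) : ℝ) := by
      have : m - i ≤ n - i := by omega
      exact_mod_cast this
    have hq : (((m - i : ℕ)) : ℝ) / ((n - i : ℕ) : ℝ) ≤ 1 := by
      rw [div_le_one hni]; exact hle
    exact mul_le_of_le_one_right (choose_div_nonneg n m i) hq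
  · have : Nat.choose n (i+1) = 0 := Nat.choose_eq_zero_of_lt (by omega)
    rw [this]
    simp only [Nat.cast_zero, div_zero]
    exact choose_div_nonneg n m i

private lemma conv_choose (n m i : ℕ) (h : m < n) :
    2 * ((Nat.choose m (i+1) : ℝ) / (Nat.choose n (i+1) : ℝ))
      ≤ (Nat.choose m i : ℝ) / (Nat.choose n i : ℝ)
        + (Nat.choose m (i+2) : ℝ) / (Nat.choose n (i+2) : ℝ) := by
  rcases le_or_gt (i+2) n with hn2 | hn2
  · have hi1 : i < n := by omega
    have hi2 : i + 1 < n := by omega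
    rw [step_eq n m i hi1, show i + 2 = (i+1)+1 from rfl, step_eq n m (i+1) hi2,
      step_eq n m i hi1]
    set a0 := (Nat.choose m i : ℝ) / (Nat.choose n i : ℝ) with ha0
    have ha0n : 0 ≤ a0 := choose_div_nonneg n m i
    rcases le_or_gt m i with hmi | hmi
    · have hz : (m - i : ℕ) = 0 := by omega
      have hz1 : (m - (i+1) : ℕ) = 0 := by omega
      simp [hz, hz1]
      positivity
    · -- i < m < n
      have e1 : ((m - i : ℕ) : ℝ) = ((m - i : ℕ) : ℝ) := rfl
      set A := ((m - i : ℕ) : ℝ) with hA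
      set B := ((n - m : ℕ) : ℝ) with hB
      have hA1 : (1:ℝ) ≤ A := by
        rw [hA]; exact_mod_cast Nat.one_le_iff_ne_zero.mpr (by omega)
      have hB1 : (1:ℝ) ≤ B := by
        rw [hB]; exact_mod_cast Nat.one_le_iff_ne_zero.mpr (by omega)
      have eni : ((n - i : ℕ) : ℝ) = A + B := by
        rw [hA, hB]
        have : n - i = (m - i) + (n - m) := by omega
        rw [this]; push_cast; ring
      have emi1 : ((m - (i+1) : ℕ) : ℝ) = A - 1 := by
        rw [hA]
        have : m - i = (m - (i+1)) + 1 := by omega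
        rw [this]; push_cast; ring
      have eni1 : ((n - (i+1) : ℕ) : ℝ) = A + B - 1 := by
        rw [hA, hB]
        have : (m - i) + (n - m) = (n - (i+1)) + 1 := by omega
        have h2 : ((m-i:ℕ):ℝ) + ((n-m:ℕ):ℝ) = ((n-(i+1):ℕ):ℝ) + 1 := by
          exact_mod_cast congrArg (Nat.cast (R := ℝ)) this
        linarith
      rw [eni, emi1, eni1]
      have hden1 : (0:ℝ) < A + B := by linarith
      have hden2 : (0:ℝ) < A + B - 1 := by linarith
      have key : a0 + a0 * (A / (A+B)) * ((A-1)/(A+B-1)) - 2*(a0*(A/(A+B)))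
          = a0 * (B*(B-1)) / ((A+B)*(A+B-1)) := by
        field_simp
        ring
      have hpos : 0 ≤ a0 * (B*(B-1)) / ((A+B)*(A+B-1)) := by
        have : 0 ≤ B - 1 := by linarith
        have hb : 0 ≤ B*(B-1) := by nlinarith
        positivity
      linarith
  · have hmid : (Nat.choose m (i+1) : ℝ) / (Nat.choose n (i+1) : ℝ) = 0 := by
      rcases lt_or_ge n (i+1) with h1 | h1
      · rw [Nat.choose_eq_zero_of_lt h1]; simp
      · have : n = i + 1 := by omega
        rw [Nat.choose_eq_zero_of_lt (by omega : m < i + 1)]; simp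
    rw [hmid]
    have := choose_div_nonneg n m i
    have := choose_div_nonneg n m (i+2)
    linarith

private lemma slope_mono (f : ℕ → ℝ) (hconv : ∀ i, 2 * f (i+1) ≤ f i + f (i+2)) :
    ∀ i j, i ≤ j → f (i+1) - f i ≤ f (j+1) - f j := by
  intro i j hij
  induction j, hij using Nat.le_induction with
  | base => exact le_refl _
  | succ k hk ih =>
    have := hconv k
    linarith

private lemma line_bound (f : ℕ → ℝ) (hconv : ∀ i, 2 * f (i+1) ≤ f i + f (i+2))
    (t : ℕ) : ∀ i : ℕ, f t + ((i:ℝ) - t) * (f (t+1) - f t) ≤ f i := by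
  have hs := slope_mono f hconv
  intro i
  rcases le_total t i with h | h
  · induction i, h using Nat.le_induction with
    | base => simp
    | succ k hk ih =>
      have h1 := hs t k hk
      push_cast
      push_cast at ih
      nlinarith [ih, h1]
  · obtain ⟨k, hk⟩ : ∃ k, i + k = t := ⟨t - i, by omega⟩
    clear h
    induction k generalizing i with
    | zero =>
      have : i = t := by omega
      subst this
      simp
    | succ k ih =>
      have h2 := ih (i+1) (by omega)
      have h1 := hs i t (by omega)
      push_cast at h2 ⊢
      nlinarith [h1, h2]

/-- Endpoint of the converse at integer points `t = Λγ`: for a non-increasing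
profile `L` with `Σ L_r = K` and coefficients
`c i = (Σ_{r=1}^{Λ−i} L r · C(Λ−r, i)) / C(Λ, i)`, any admissible placement
`x_0,…,x_Λ ≥ 0` with `Σ x_i = N` and `Σ i·x_i ≤ t·N` satisfies
`Σ (x_i/N)·c_i ≥ c_t = (Σ_{r=1}^{Λ−t} L r · C(Λ−r, t)) / C(Λ, t)`. -/
theorem converse_endpoint (Λ K N : ℕ) (hΛ : 1 ≤ Λ) (hK : 1 ≤ K) (hN : 1 ≤ N)
    (t : ℕ) (ht : t ≤ Λ) (L : ℕ → ℕ)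
    (hmono : ∀ a b, 1 ≤ a → a ≤ b → b ≤ Λ → L b ≤ L a)
    (hsum : ∑ r ∈ Finset.Icc 1 Λ, L r = K)
    (c : ℕ → ℝ)
    (hc : ∀ i, c i =
      (∑ r ∈ Finset.Icc 1 (Λ - i), (L r : ℝ) * (Nat.choose (Λ - r) i : ℝ)) /
        (Nat.choose Λ i : ℝ))
    (x : ℕ → ℝ) (hx : ∀ i, i ≤ Λ → 0 ≤ x i)
    (hxsum : ∑ i ∈ Finset.range (Λ + 1), x i = (N : ℝ))
    (hcache : ∑ i ∈ Finset.range (Λ + 1), (i : ℝ) * x i ≤ (t : ℝ) * N) :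
    c t = (∑ r ∈ Finset.Icc 1 (Λ - t), (L r : ℝ) * (Nat.choose (Λ - r) t : ℝ)) /
        (Nat.choose Λ t : ℝ) ∧
    (∑ r ∈ Finset.Icc 1 (Λ - t), (L r : ℝ) * (Nat.choose (Λ - r) t : ℝ)) /
        (Nat.choose Λ t : ℝ) ≤
      ∑ i ∈ Finset.range (Λ + 1), (x i / (N : ℝ)) * c i := by
  refine ⟨hc t, ?_⟩
  rw [← hc t]
  -- the combined coefficient function
  set g : ℕ → ℝ := fun i => ∑ r ∈ Finset.Icc 1 Λ,
      (L r : ℝ) * ((Nat.choose (Λ - r) i : ℝ) / (Nat.choose Λ i : ℝ)) with hg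
  have hgc : ∀ i, c i = g i := by
    intro i
    have hext : ∑ r ∈ Finset.Icc 1 (Λ - i), (L r : ℝ) * (Nat.choose (Λ - r) i : ℝ)
        = ∑ r ∈ Finset.Icc 1 Λ, (L r : ℝ) * (Nat.choose (Λ - r) i : ℝ) := by
      apply Finset.sum_subset (Finset.Icc_subset_Icc_right (Nat.sub_le Λ i))
      intro r hr hnr
      simp only [Finset.mem_Icc] at hr hnr
      have : Nat.choose (Λ - r) i = 0 := Nat.choose_eq_zero_of_lt (by omega)
      rw [this]; simp
    rw [hc i, hext, hg, Finset.sum_div]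
    exact Finset.sum_congr rfl fun r _ => (mul_div_assoc _ _ _)
  have hrlt : ∀ r ∈ Finset.Icc 1 Λ, Λ - r < Λ := by
    intro r hr
    simp only [Finset.mem_Icc] at hr
    omega
  have hgconv : ∀ i, 2 * g (i+1) ≤ g i + g (i+2) := by
    intro i
    simp only [hg]
    rw [Finset.mul_sum, ← Finset.sum_add_distrib]
    apply Finset.sum_le_sum
    intro r hr
    have h := conv_choose Λ (Λ - r) i (hrlt r hr)
    have hL : (0:ℝ) ≤ (L r : ℝ) := Nat.cast_nonneg _
    nlinarith [mul_le_mul_of_nonneg_left h hL]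
  have hgstep : g (t+1) ≤ g t := by
    simp only [hg]
    apply Finset.sum_le_sum
    intro r hr
    exact mul_le_mul_of_nonneg_left (step_le Λ (Λ - r) t (by omega)) (Nat.cast_nonneg _)
  set d := g (t+1) - g t with hd
  have hdle : d ≤ 0 := by rw [hd]; linarith
  have hbound := line_bound g hgconv t
  have hN0 : (0:ℝ) < N := by exact_mod_cast Nat.lt_of_lt_of_le Nat.zero_lt_one hN
  have key : ∑ i ∈ Finset.range (Λ+1), (x i / N) * (g t + ((i:ℝ) - t) * d)
      ≤ ∑ i ∈ Finset.range (Λ+1), (x i / N) * g i := by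
    apply Finset.sum_le_sum
    intro i hi
    have hxi : 0 ≤ x i := hx i (Nat.lt_succ_iff.mp (Finset.mem_range.mp hi))
    exact mul_le_mul_of_nonneg_left (hbound i) (div_nonneg hxi hN0.le)
  have expand : ∑ i ∈ Finset.range (Λ+1), (x i / N) * (g t + ((i:ℝ) - t) * d)
      = (g t - d * t) * ((∑ i ∈ Finset.range (Λ+1), x i) / N)
        + (d / N) * (∑ i ∈ Finset.range (Λ+1), (i:ℝ) * x i) := by
    rw [Finset.sum_div, Finset.mul_sum, Finset.mul_sum, ← Finset.sum_add_distrib]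
    exact Finset.sum_congr rfl fun i _ => by ring
  rw [hxsum, div_self hN0.ne'] at expand
  have h5 : (d / N) * ((t:ℝ) * N) ≤ (d / N) * (∑ i ∈ Finset.range (Λ+1), (i:ℝ) * x i) :=
    mul_le_mul_of_nonpos_left hcache (div_nonpos_of_nonpos_of_nonneg hdle hN0.le)
  have h6 : (d / N) * ((t:ℝ) * N) = d * t := by
    field_simp
  have hfin : ∑ i ∈ Finset.range (Λ+1), (x i / N) * c i
      = ∑ i ∈ Finset.range (Λ+1), (x i / N) * g i :=
    Finset.sum_congr rfl fun i _ => by rw [hgc i]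
  rw [hgc t, hfin]
  rw [mul_one] at expand
  linarith
end

section
/- Let Λ ≥ 1, let t ∈ {0,…,Λ}, and let L : {1,…,Λ} → ℕ be non-increasing (L_1 ≥ … ≥ L_Λ) with Σ_{r=1}^{Λ} L_r = K. Then ( Σ_{r=1}^{Λ−t} L_r · C(Λ−r, t) ) / C(Λ, t) ≥ K·(Λ−t) / ( Λ·(t+1) ), i.e., the delay expression for any profile L is at least the value K(1−γ)/(Λγ+1) attained by the uniform profile, where γ = t/Λ. -/
open Finset

lemma hockey (Λ t : ℕ) (ht : t ≤ Λ) :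
    ∑ r ∈ Finset.Icc 1 Λ, Nat.choose (Λ - r) t = Nat.choose Λ (t + 1) := by
  have h1 : ∑ r ∈ Finset.Icc 1 Λ, Nat.choose (Λ - r) t
      = ∑ m ∈ Finset.range Λ, Nat.choose m t := by
    rw [Finset.range_eq_Ico, ← Finset.Ico_add_one_right_eq_Icc]
    apply Finset.sum_nbij' (fun r => Λ - r) (fun m => Λ - m) <;> intros <;>
      simp_all [Nat.lt_succ_iff, Finset.mem_Ico] <;> omega
  rw [h1]
  rcases Nat.lt_or_ge t Λ with h | h
  · have h2 : ∑ m ∈ Finset.range Λ, Nat.choose m t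
        = ∑ m ∈ Finset.Icc t (Λ - 1), Nat.choose m t := by
      rw [Finset.range_eq_Ico]
      refine (Finset.sum_subset (fun x hx => ?_) (fun x hx hx' => ?_)).symm
      · simp only [Finset.mem_Icc] at hx; exact Finset.mem_Ico.mpr ⟨by omega, by omega⟩
      · simp only [Finset.mem_Ico, Finset.mem_Icc, not_and, not_le] at hx hx'
        exact Nat.choose_eq_zero_of_lt (by omega)
    rw [h2, Nat.sum_Icc_choose]
    congr 1; omega
  · have h3 : t = Λ := le_antisymm ht h
    subst h3
    rw [Nat.choose_eq_zero_of_lt (by omega)]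
    apply Finset.sum_eq_zero
    intro m hm
    simp only [Finset.mem_range] at hm
    exact Nat.choose_eq_zero_of_lt hm

/-- Corollary 1 (uniform profile is optimal): for any non-increasing profile `L`
with `Σ_{r=1}^{Λ} L r = K` and any `t ∈ {0,…,Λ}`,
`(Σ_{r=1}^{Λ−t} L r · C(Λ−r, t)) / C(Λ, t) ≥ K·(Λ−t)/(Λ·(t+1))`,
i.e. the delay of any profile is at least the uniform-profile delay
`K(1−γ)/(Λγ+1)` with `γ = t/Λ`. -/
theorem uniform_profile_minimizes (Λ K t : ℕ) (hΛ : 1 ≤ Λ) (ht : t ≤ Λ)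
    (L : ℕ → ℕ)
    (hmono : ∀ a b, 1 ≤ a → a ≤ b → b ≤ Λ → L b ≤ L a)
    (hsum : ∑ r ∈ Finset.Icc 1 Λ, L r = K) :
    (K : ℚ) * ((Λ : ℚ) - (t : ℚ)) / ((Λ : ℚ) * ((t : ℚ) + 1)) ≤
      (∑ r ∈ Finset.Icc 1 (Λ - t), (L r : ℚ) * (Nat.choose (Λ - r) t : ℚ)) /
        (Nat.choose Λ t : ℚ) := by
  set S : ℚ := ∑ r ∈ Finset.Icc 1 Λ, (L r : ℚ) * (Nat.choose (Λ - r) t : ℚ) with hS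
  have hsum_eq : (∑ r ∈ Finset.Icc 1 (Λ - t), (L r : ℚ) * (Nat.choose (Λ - r) t : ℚ)) = S := by
    rw [hS]
    apply Finset.sum_subset
    · exact Finset.Icc_subset_Icc_right (by omega)
    · intro x hx hx'
      simp only [Finset.mem_Icc] at hx hx'
      have : Nat.choose (Λ - x) t = 0 := Nat.choose_eq_zero_of_lt (by omega)
      simp [this]
  -- Chebyshev
  have hmv : MonovaryOn (fun r => (L r : ℚ)) (fun r => (Nat.choose (Λ - r) t : ℚ))
      (Finset.Icc 1 Λ) := by
    intro i hi j hj hlt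
    simp only [Finset.mem_coe, Finset.mem_Icc] at hi hj
    have hji : j ≤ i := by
      by_contra hc
      push_neg at hc
      have hle : Nat.choose (Λ - j) t ≤ Nat.choose (Λ - i) t :=
        Nat.choose_le_choose t (by omega)
      exact absurd hlt (by simp only [not_lt]; exact_mod_cast hle)
    simp only
    exact_mod_cast hmono j i hj.1 hji hi.2
  have hcheb := hmv.sum_mul_sum_le_card_mul_sum
  have hh : (∑ i ∈ Finset.Icc 1 Λ, ((Nat.choose (Λ - i) t : ℕ) : ℚ))
      = ((Nat.choose Λ (t+1) : ℕ) : ℚ) := by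
    rw [← Nat.cast_sum, hockey Λ t ht]
  have hKc : (∑ i ∈ Finset.Icc 1 Λ, ((L i : ℕ) : ℚ)) = (K : ℚ) := by
    rw [← Nat.cast_sum, hsum]
  rw [hh, hKc, Nat.card_Icc] at hcheb
  have hkey : (K : ℚ) * (Nat.choose Λ (t+1) : ℚ) ≤ (Λ : ℚ) * S := by
    have : ((Λ + 1 - 1 : ℕ) : ℚ) = (Λ : ℚ) := by push_cast; ring
    calc (K : ℚ) * (Nat.choose Λ (t+1) : ℚ) ≤ _ := hcheb
      _ = (Λ : ℚ) * S := by rw [this]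
  have hC : (0 : ℚ) < (Nat.choose Λ t : ℚ) := by
    exact_mod_cast Nat.choose_pos ht
  rw [hsum_eq, div_le_div_iff₀ (by positivity) hC]
  have hid : (Nat.choose Λ (t+1) : ℚ) * (t + 1 : ℚ) = (Nat.choose Λ t : ℚ) * ((Λ:ℚ) - t) := by
    have := Nat.choose_succ_right_eq Λ t
    have hc : ((Λ - t : ℕ) : ℚ) = (Λ : ℚ) - t := by push_cast [ht]; ring
    calc (Nat.choose Λ (t+1) : ℚ) * (t + 1 : ℚ)
        = ((Nat.choose Λ (t+1) * (t+1) : ℕ) : ℚ) := by push_cast; ring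
      _ = ((Nat.choose Λ t * (Λ - t) : ℕ) : ℚ) := by rw [this]
      _ = (Nat.choose Λ t : ℚ) * ((Λ:ℚ) - t) := by push_cast [ht]; ring
  nlinarith [hkey, hid, hC, show (0:ℚ) < (Λ:ℚ) from by exact_mod_cast hΛ]
end

section
/- Let Λ ≥ 1 and t ∈ {0,…,Λ}. Let L, L' : {1,…,Λ} → ℕ both be non-increasing with the same total sum Σ_{r=1}^{Λ} L_r = Σ_{r=1}^{Λ} L'_r = K, and suppose L majorizes L', i.e., Σ_{r=1}^{m} L_r ≥ Σ_{r=1}^{m} L'_r for every m ∈ {1,…,Λ}. Then Σ_{r=1}^{Λ−t} L_r · C(Λ−r, t) ≥ Σ_{r=1}^{Λ−t} L'_r · C(Λ−r, t); consequently the delay expression (Σ_{r=1}^{Λ−t} L_r C(Λ−r,t))/C(Λ,t) is at least that of L'. -/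
open Finset

/-- Abel summation by parts over `Icc 1 N`, in ℤ. -/
lemma abel_icc (a w : ℕ → ℤ) (N : ℕ) :
    ∑ r ∈ Finset.Icc 1 N, a r * w r =
      (∑ m ∈ Finset.Icc 1 N, (∑ r ∈ Finset.Icc 1 m, a r) * (w m - w (m + 1)))
        + (∑ r ∈ Finset.Icc 1 N, a r) * w (N + 1) := by
  induction N with
  | zero => simp
  | succ n ih =>
      have h1 : (1:ℕ) ≤ n + 1 := by omega
      rw [Finset.sum_Icc_succ_top h1, Finset.sum_Icc_succ_top h1, Finset.sum_Icc_succ_top h1, ih]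
      ring

/-- Skewness increases delay: if the non-increasing profiles `L` and `L'` have the
same total `K` and `L` majorizes `L'` (partial sums dominate), then
`Σ_{r=1}^{Λ−t} L r · C(Λ−r, t) ≥ Σ_{r=1}^{Λ−t} L' r · C(Λ−r, t)`, and consequently
the delay expression of `L` is at least that of `L'`. -/
theorem majorization_increases_delay (Λ t K : ℕ) (hΛ : 1 ≤ Λ) (ht : t ≤ Λ)
    (L L' : ℕ → ℕ)
    (hmono : ∀ a b, 1 ≤ a → a ≤ b → b ≤ Λ → L b ≤ L a)
    (hmono' : ∀ a b, 1 ≤ a → a ≤ b → b ≤ Λ → L' b ≤ L' a)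
    (hsum : ∑ r ∈ Finset.Icc 1 Λ, L r = K)
    (hsum' : ∑ r ∈ Finset.Icc 1 Λ, L' r = K)
    (hmaj : ∀ m ∈ Finset.Icc 1 Λ,
      ∑ r ∈ Finset.Icc 1 m, L' r ≤ ∑ r ∈ Finset.Icc 1 m, L r) :
    (∑ r ∈ Finset.Icc 1 (Λ - t), L' r * Nat.choose (Λ - r) t ≤
        ∑ r ∈ Finset.Icc 1 (Λ - t), L r * Nat.choose (Λ - r) t) ∧
    ((∑ r ∈ Finset.Icc 1 (Λ - t), (L' r : ℚ) * (Nat.choose (Λ - r) t : ℚ)) /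
        (Nat.choose Λ t : ℚ) ≤
      (∑ r ∈ Finset.Icc 1 (Λ - t), (L r : ℚ) * (Nat.choose (Λ - r) t : ℚ)) /
        (Nat.choose Λ t : ℚ)) := by
  set N := Λ - t with hN
  -- weights
  set w : ℕ → ℤ := fun r => (Nat.choose (Λ - r) t : ℤ) with hw
  have hwmono : ∀ m, w (m + 1) ≤ w m := by
    intro m
    simp only [hw]
    exact_mod_cast Nat.choose_le_choose t (Nat.sub_le_sub_left (Nat.le_succ m) Λ)
  have hwnonneg : ∀ m, 0 ≤ w m := fun m => by positivity
  -- main integer inequality via Abel summation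
  have key : ∑ r ∈ Finset.Icc 1 N, (L' r : ℤ) * w r ≤
      ∑ r ∈ Finset.Icc 1 N, (L r : ℤ) * w r := by
    rw [abel_icc (fun r => (L' r : ℤ)) w N, abel_icc (fun r => (L r : ℤ)) w N]
    have hS : ∀ m ∈ Finset.Icc 1 N, ∑ r ∈ Finset.Icc 1 m, (L' r : ℤ) ≤
        ∑ r ∈ Finset.Icc 1 m, (L r : ℤ) := by
      intro m hm
      rw [Finset.mem_Icc] at hm
      have : m ∈ Finset.Icc 1 Λ := Finset.mem_Icc.mpr ⟨hm.1, le_trans hm.2 (Nat.sub_le _ _)⟩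
      have := hmaj m this
      push_cast
      exact_mod_cast this
    apply add_le_add
    · apply Finset.sum_le_sum
      intro m hm
      exact mul_le_mul_of_nonneg_right (hS m hm) (sub_nonneg.mpr (hwmono m))
    · by_cases hNmem : N ∈ Finset.Icc 1 N
      · exact mul_le_mul_of_nonneg_right (hS N hNmem) (hwnonneg _)
      · have : N = 0 := by
          rcases Nat.eq_zero_or_pos N with h | h
          · exact h
          · exact absurd (Finset.mem_Icc.mpr ⟨h, le_refl N⟩) hNmem
        simp [this]
  have keyN : ∑ r ∈ Finset.Icc 1 N, L' r * Nat.choose (Λ - r) t ≤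
      ∑ r ∈ Finset.Icc 1 N, L r * Nat.choose (Λ - r) t := by
    simp only [hw] at key
    exact_mod_cast key
  refine ⟨keyN, ?_⟩
  have hden : (0 : ℚ) < (Nat.choose Λ t : ℚ) := by
    exact_mod_cast Nat.choose_pos ht
  rw [div_le_div_iff₀ hden hden]
  rw [mul_le_mul_iff_of_pos_right hden]
  have h1 : (∑ r ∈ Finset.Icc 1 N, (L' r : ℚ) * (Nat.choose (Λ - r) t : ℚ)) =
      ((∑ r ∈ Finset.Icc 1 N, L' r * Nat.choose (Λ - r) t : ℕ) : ℚ) := by push_cast; rfl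
  have h2 : (∑ r ∈ Finset.Icc 1 N, (L r : ℚ) * (Nat.choose (Λ - r) t : ℚ)) =
      ((∑ r ∈ Finset.Icc 1 N, L r * Nat.choose (Λ - r) t : ℕ) : ℚ) := by push_cast; rfl
  rw [h1, h2]
  exact_mod_cast keyN
end

section
/- Let Λ ≥ 1, let t ∈ {0,…,Λ}, and let L : {1,…,Λ} → ℕ be non-increasing with Σ_{r=1}^{Λ} L_r = K. Then ( Σ_{r=1}^{Λ−t} L_r · C(Λ−r, t) ) / C(Λ, t) ≤ K·(Λ−t)/Λ, with equality when L_1 = K and L_r = 0 for r ≥ 2. Equivalently, with γ = t/Λ, the delay expression never exceeds K(1−γ), the value achieved when all K users share a single cache. -/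
open Finset

lemma key_choose_id (Λ t : ℕ) (hΛ : 1 ≤ Λ) (ht : t ≤ Λ) :
    (Λ : ℚ) * (Nat.choose (Λ - 1) t : ℚ) = ((Λ : ℚ) - t) * (Nat.choose Λ t : ℚ) := by
  have h := Nat.choose_mul_succ_eq (Λ - 1) t
  rw [Nat.sub_add_cancel hΛ] at h
  have h2 := congrArg (Nat.cast : ℕ → ℚ) h
  push_cast [Nat.cast_sub ht] at h2
  linarith

lemma key_div (Λ t K : ℕ) (hΛ : 1 ≤ Λ) (ht : t ≤ Λ) :
    ((K : ℚ) * (Nat.choose (Λ - 1) t : ℚ)) / (Nat.choose Λ t : ℚ)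
      = (K : ℚ) * ((Λ : ℚ) - (t : ℚ)) / (Λ : ℚ) := by
  have hc : (0 : ℚ) < (Nat.choose Λ t : ℚ) := by
    exact_mod_cast Nat.choose_pos ht
  have hΛ' : (0 : ℚ) < (Λ : ℚ) := by exact_mod_cast hΛ
  have hkey := key_choose_id Λ t hΛ ht
  field_simp
  ring_nf
  nlinarith [hkey]

/-- The fully skewed profile is the worst case: for any non-increasing profile `L`
with `Σ_{r=1}^{Λ} L r = K`,
`(Σ_{r=1}^{Λ−t} L r · C(Λ−r, t)) / C(Λ, t) ≤ K·(Λ−t)/Λ`, with equality when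
`L 1 = K` and `L r = 0` for `2 ≤ r ≤ Λ` (delay `K(1−γ)`, `γ = t/Λ`). -/
theorem skewed_profile_maximizes (Λ t K : ℕ) (hΛ : 1 ≤ Λ) (ht : t ≤ Λ)
    (L : ℕ → ℕ)
    (hmono : ∀ a b, 1 ≤ a → a ≤ b → b ≤ Λ → L b ≤ L a)
    (hsum : ∑ r ∈ Finset.Icc 1 Λ, L r = K) :
    ((∑ r ∈ Finset.Icc 1 (Λ - t), (L r : ℚ) * (Nat.choose (Λ - r) t : ℚ)) /
        (Nat.choose Λ t : ℚ) ≤ (K : ℚ) * ((Λ : ℚ) - (t : ℚ)) / (Λ : ℚ)) ∧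
    ((L 1 = K ∧ ∀ r, 2 ≤ r → r ≤ Λ → L r = 0) →
      (∑ r ∈ Finset.Icc 1 (Λ - t), (L r : ℚ) * (Nat.choose (Λ - r) t : ℚ)) /
          (Nat.choose Λ t : ℚ) = (K : ℚ) * ((Λ : ℚ) - (t : ℚ)) / (Λ : ℚ)) := by
  have hc : (0 : ℚ) < (Nat.choose Λ t : ℚ) := by
    exact_mod_cast Nat.choose_pos ht
  have hcast : (∑ r ∈ Finset.Icc 1 (Λ - t), (L r : ℚ) * (Nat.choose (Λ - r) t : ℚ))
      = ((∑ r ∈ Finset.Icc 1 (Λ - t), L r * Nat.choose (Λ - r) t : ℕ) : ℚ) := by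
    push_cast
    rfl
  constructor
  · -- inequality
    have hN : ∑ r ∈ Finset.Icc 1 (Λ - t), L r * Nat.choose (Λ - r) t
        ≤ K * Nat.choose (Λ - 1) t := by
      calc ∑ r ∈ Finset.Icc 1 (Λ - t), L r * Nat.choose (Λ - r) t
          ≤ ∑ r ∈ Finset.Icc 1 (Λ - t), L r * Nat.choose (Λ - 1) t := by
            refine Finset.sum_le_sum ?_
            intro r hr
            simp only [Finset.mem_Icc] at hr
            exact Nat.mul_le_mul_left _ (Nat.choose_le_choose t (by omega))
        _ = (∑ r ∈ Finset.Icc 1 (Λ - t), L r) * Nat.choose (Λ - 1) t := by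
            rw [Finset.sum_mul]
        _ ≤ K * Nat.choose (Λ - 1) t := by
            refine Nat.mul_le_mul_right _ ?_
            rw [← hsum]
            exact Finset.sum_le_sum_of_subset
              (Finset.Icc_subset_Icc_right (Nat.sub_le Λ t))
    rw [hcast, ← key_div Λ t K hΛ ht]
    gcongr
    exact_mod_cast hN
  · -- equality in the skewed case
    rintro ⟨h1, h0⟩
    have hN : ∑ r ∈ Finset.Icc 1 (Λ - t), L r * Nat.choose (Λ - r) t
        = K * Nat.choose (Λ - 1) t := by
      rcases Nat.eq_zero_or_pos (Λ - t) with h | h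
      · have hts : t = Λ := by omega
        subst hts
        rw [h]
        simp [Nat.choose_eq_zero_of_lt (show t - 1 < t by omega)]
      · rw [Finset.sum_eq_single_of_mem 1 (Finset.mem_Icc.mpr ⟨le_rfl, h⟩)]
        · rw [h1]
        · intro r hr hne
          simp only [Finset.mem_Icc] at hr
          rw [h0 r (by omega) (by omega)]
          ring
    rw [hcast, hN]
    exact_mod_cast key_div Λ t K hΛ ht
end
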